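/- Let K be a field, E a graph, v, w ∈ E^0, and e_1, …, e_n distinct edges with s(e_i) = v, r(e_i) = w, and assume |s^{-1}(v)| = n (so s^{-1}(v) = {e_1, …, e_n}). Let End_{v,w}(L_K(E)) denote the set of all K-algebra endomorphisms λ of L_K(E) with λ(u) = u, λ(e) = e and λ(e*) = e* for all u ∈ E^0 and all e ∈ E^1 \ {e_1, …, e_n}; it is a monoid under composition. Then the map Φ : (GL_n(wL_K(E)w), ⋆) → End_{v,w}(L_K(E)), P ↦ φ_P, is a monoid isomorphism, where P ⋆ Q := P φ_P(Q). Moreover, every λ ∈ End_{v,w}(L_K(E)) equals φ_P for the unique matrix P = (p_{ij}) ∈ GL_n(wL_K(E)w) given by p_{ij} = e_i* λ(e_j). -/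

import Mathlib

/-- A directed graph `E = (E⁰, E¹, s, r)`. -/
structure DirGraph : Type 1 where
  V : Type
  E : Type
  s : E → V
  r : E → V

/-- Generators of the Leavitt path algebra: vertices, edges and ghost edges. -/
inductive LGen (G : DirGraph) : Type
  | vertex : G.V → LGen G
  | edge : G.E → LGen G
  | ghost : G.E → LGen G

/-- The defining relations of the Leavitt path algebra. -/
inductive LRel (K : Type) [Field K] (G : DirGraph) :
    FreeAlgebra K (LGen G) → FreeAlgebra K (LGen G) → Prop
  | vertexIdem (u : G.V) :
      LRel K G (FreeAlgebra.ι K (LGen.vertex u) * FreeAlgebra.ι K (LGen.vertex u))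
        (FreeAlgebra.ι K (LGen.vertex u))
  | vertexOrth (u u' : G.V) (h : u ≠ u') :
      LRel K G (FreeAlgebra.ι K (LGen.vertex u) * FreeAlgebra.ι K (LGen.vertex u')) 0
  | sourceEdge (e : G.E) :
      LRel K G (FreeAlgebra.ι K (LGen.vertex (G.s e)) * FreeAlgebra.ι K (LGen.edge e))
        (FreeAlgebra.ι K (LGen.edge e))
  | edgeRange (e : G.E) :
      LRel K G (FreeAlgebra.ι K (LGen.edge e) * FreeAlgebra.ι K (LGen.vertex (G.r e)))
        (FreeAlgebra.ι K (LGen.edge e))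
  | ghostSource (e : G.E) :
      LRel K G (FreeAlgebra.ι K (LGen.ghost e) * FreeAlgebra.ι K (LGen.vertex (G.s e)))
        (FreeAlgebra.ι K (LGen.ghost e))
  | rangeGhost (e : G.E) :
      LRel K G (FreeAlgebra.ι K (LGen.vertex (G.r e)) * FreeAlgebra.ι K (LGen.ghost e))
        (FreeAlgebra.ι K (LGen.ghost e))
  | ghostEdgeSame (e : G.E) :
      LRel K G (FreeAlgebra.ι K (LGen.ghost e) * FreeAlgebra.ι K (LGen.edge e))
        (FreeAlgebra.ι K (LGen.vertex (G.r e)))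
  | ghostEdgeNe (e f : G.E) (h : e ≠ f) :
      LRel K G (FreeAlgebra.ι K (LGen.ghost e) * FreeAlgebra.ι K (LGen.edge f)) 0
  | ck2 (u : G.V) (hfin : {e : G.E | G.s e = u}.Finite) (hne : {e : G.E | G.s e = u}.Nonempty) :
      LRel K G (FreeAlgebra.ι K (LGen.vertex u))
        (hfin.toFinset.sum fun e =>
          FreeAlgebra.ι K (LGen.edge e) * FreeAlgebra.ι K (LGen.ghost e))

/-- The Leavitt path algebra `L_K(E)` of a graph. -/
abbrev LPA (K : Type) [Field K] (G : DirGraph) : Type := RingQuot (LRel K G)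

noncomputable def vertexEl (K : Type) [Field K] (G : DirGraph) (u : G.V) : LPA K G :=
  RingQuot.mkAlgHom K (LRel K G) (FreeAlgebra.ι K (LGen.vertex u))

noncomputable def edgeEl (K : Type) [Field K] (G : DirGraph) (e : G.E) : LPA K G :=
  RingQuot.mkAlgHom K (LRel K G) (FreeAlgebra.ι K (LGen.edge e))

noncomputable def ghostEl (K : Type) [Field K] (G : DirGraph) (e : G.E) : LPA K G :=
  RingQuot.mkAlgHom K (LRel K G) (FreeAlgebra.ι K (LGen.ghost e))

/-- A list of edges is a (finite) path when ranges and sources match up. -/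
def IsPath (G : DirGraph) (l : List G.E) : Prop :=
  l.Chain' fun e f => G.r e = G.s f

noncomputable def edgeProd (K : Type) [Field K] (G : DirGraph) (l : List G.E) : LPA K G :=
  (l.map (edgeEl K G)).prod

/-- For a path `q`, the element `q* = e_k* ⋯ e_1*`. -/
noncomputable def ghostProd (K : Type) [Field K] (G : DirGraph) (l : List G.E) : LPA K G :=
  (l.reverse.map (ghostEl K G)).prod

/-- The degree `d` component of the ℤ-grading of `L_K(E)`:
the `K`-span of the elements `p q*` with `r(p) = r(q)` and `|p| - |q| = d`. -/
noncomputable def lpaComponent (K : Type) [Field K] (G : DirGraph) (d : ℤ) :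
    Submodule K (LPA K G) :=
  Submodule.span K {x : LPA K G | ∃ p q : List G.E, ∃ u : G.V,
    IsPath G p ∧ IsPath G q ∧ (p.length : ℤ) - (q.length : ℤ) = d ∧
    x = edgeProd K G p * vertexEl K G u * ghostProd K G q}

/-- Membership in the corner `w L_K(E) w`. -/
def InCorner (K : Type) [Field K] (G : DirGraph) (w : G.V) (x : LPA K G) : Prop :=
  vertexEl K G w * x * vertexEl K G w = x

/-- `(P, P')` is a pair consisting of an element of `GL_n(w L_K(E) w)` and its inverse:
all entries lie in the corner `w L_K(E) w`, and `P P' = P' P = w·I_n`,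
the identity matrix of `M_n(w L_K(E) w)`. -/
def IsCornerGLPair (K : Type) [Field K] (G : DirGraph) (w : G.V) {n : ℕ}
    (P P' : Matrix (Fin n) (Fin n) (LPA K G)) : Prop :=
  (∀ i j, InCorner K G w (P i j)) ∧ (∀ i j, InCorner K G w (P' i j)) ∧
    P * P' = Matrix.diagonal (fun _ => vertexEl K G w) ∧
    P' * P = Matrix.diagonal (fun _ => vertexEl K G w)

/-- The defining property of the endomorphism `φ_P` of `L_K(E)` attached to a matrix
`P` (with inverse `P'`) over the corner `w L_K(E) w`:  it fixes all vertices, fixes all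
edges and ghost edges other than `e_1, …, e_n`, and sends
`e_i ↦ Σ_k e_k p_{k i}` and `e_i* ↦ Σ_k p'_{i k} e_k*`. -/
def PhiProps (K : Type) [Field K] (G : DirGraph) {n : ℕ} (es : Fin n → G.E)
    (P P' : Matrix (Fin n) (Fin n) (LPA K G)) (φ : LPA K G →ₐ[K] LPA K G) : Prop :=
  (∀ u : G.V, φ (vertexEl K G u) = vertexEl K G u) ∧
  (∀ e : G.E, e ∉ Set.range es → φ (edgeEl K G e) = edgeEl K G e) ∧
  (∀ e : G.E, e ∉ Set.range es → φ (ghostEl K G e) = ghostEl K G e) ∧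
  (∀ i, φ (edgeEl K G (es i)) = ∑ k, edgeEl K G (es k) * P k i) ∧
  (∀ i, φ (ghostEl K G (es i)) = ∑ k, P' i k * ghostEl K G (es k))

section aux
variable (K : Type) [Field K] (G : DirGraph)

lemma vmul_self (u : G.V) : vertexEl K G u * vertexEl K G u = vertexEl K G u := by
  simpa [vertexEl, map_mul] using RingQuot.mkAlgHom_rel K (LRel.vertexIdem (K := K) (G := G) u)

lemma sE (e : G.E) : vertexEl K G (G.s e) * edgeEl K G e = edgeEl K G e := by
  simpa [vertexEl, edgeEl, map_mul] using RingQuot.mkAlgHom_rel K (LRel.sourceEdge (K := K) (G := G) e)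

lemma Er (e : G.E) : edgeEl K G e * vertexEl K G (G.r e) = edgeEl K G e := by
  simpa [vertexEl, edgeEl, map_mul] using RingQuot.mkAlgHom_rel K (LRel.edgeRange (K := K) (G := G) e)

lemma gS (e : G.E) : ghostEl K G e * vertexEl K G (G.s e) = ghostEl K G e := by
  simpa [vertexEl, ghostEl, map_mul] using RingQuot.mkAlgHom_rel K (LRel.ghostSource (K := K) (G := G) e)

lemma rG (e : G.E) : vertexEl K G (G.r e) * ghostEl K G e = ghostEl K G e := by
  simpa [vertexEl, ghostEl, map_mul] using RingQuot.mkAlgHom_rel K (LRel.rangeGhost (K := K) (G := G) e)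

lemma gE_same (e : G.E) : ghostEl K G e * edgeEl K G e = vertexEl K G (G.r e) := by
  simpa [vertexEl, edgeEl, ghostEl, map_mul] using RingQuot.mkAlgHom_rel K (LRel.ghostEdgeSame (K := K) (G := G) e)

lemma gE_ne (e f : G.E) (h : e ≠ f) : ghostEl K G e * edgeEl K G f = 0 := by
  simpa [edgeEl, ghostEl, map_mul] using RingQuot.mkAlgHom_rel K (LRel.ghostEdgeNe (K := K) (G := G) e f h)

lemma ck2' (u : G.V) (hfin : {e : G.E | G.s e = u}.Finite) (hne : {e : G.E | G.s e = u}.Nonempty) :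
    vertexEl K G u = hfin.toFinset.sum fun e => edgeEl K G e * ghostEl K G e := by
  simpa [vertexEl, edgeEl, ghostEl, map_mul, map_sum] using
    RingQuot.mkAlgHom_rel K (LRel.ck2 (K := K) (G := G) u hfin hne)

end aux
section derived
variable {K : Type} [Field K] {G : DirGraph} {n : ℕ}

lemma corner_left {w : G.V} {x : LPA K G} (h : InCorner K G w x) :
    vertexEl K G w * x = x := by
  conv_lhs => rw [← h]
  rw [← mul_assoc, ← mul_assoc, vmul_self]
  exact h

lemma corner_right {w : G.V} {x : LPA K G} (h : InCorner K G w x) :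
    x * vertexEl K G w = x := by
  conv_lhs => rw [← h]
  rw [mul_assoc, mul_assoc, vmul_self, ← mul_assoc]
  exact h

variable {v w : G.V} {es : Fin n → G.E} (hn : 0 < n) (hes : Function.Injective es)
  (hs : ∀ i, G.s (es i) = v) (hr : ∀ i, G.r (es i) = w)
  (hfull : ∀ e : G.E, G.s e = v → e ∈ Set.range es)

include hs hfull hes hn in
lemma ck2v : vertexEl K G v = ∑ i, edgeEl K G (es i) * ghostEl K G (es i) := by
  classical
  have hset : {e : G.E | G.s e = v} = Set.range es := by
    ext e
    constructor
    · exact hfull e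
    · rintro ⟨i, rfl⟩; exact hs i
  have hfin : {e : G.E | G.s e = v}.Finite := hset ▸ Set.finite_range es
  have hne : {e : G.E | G.s e = v}.Nonempty := ⟨es ⟨0, hn⟩, hs _⟩
  rw [ck2' K G v hfin hne]
  have htf : hfin.toFinset = Finset.image es Finset.univ := by
    ext e; simp [hset]
  rw [htf, Finset.sum_image (fun a _ b _ h => hes h)]

include hes hr in
lemma gE_delta (i j : Fin n) :
    ghostEl K G (es i) * edgeEl K G (es j) =
      if i = j then vertexEl K G w else 0 := by
  by_cases h : i = j
  · subst h; simp [gE_same, hr i]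
  · simp [h, gE_ne K G _ _ (fun he => h (hes he))]

end derived


section main
variable {K : Type} [Field K] {G : DirGraph} {n : ℕ}
variable {v w : G.V} {es : Fin n → G.E}

/-- Part 1: existence of the inverse and PhiProps for a given endomorphism. -/
lemma part1 (hn : 0 < n) (hes : Function.Injective es)
    (hs : ∀ i, G.s (es i) = v) (hr : ∀ i, G.r (es i) = w)
    (hfull : ∀ e : G.E, G.s e = v → e ∈ Set.range es)
    (lam : LPA K G →ₐ[K] LPA K G)
    (h0 : ∀ u : G.V, lam (vertexEl K G u) = vertexEl K G u)
    (h1 : ∀ e : G.E, e ∉ Set.range es → lam (edgeEl K G e) = edgeEl K G e)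
    (h2 : ∀ e : G.E, e ∉ Set.range es → lam (ghostEl K G e) = ghostEl K G e) :
    ∃ P' : Matrix (Fin n) (Fin n) (LPA K G),
      IsCornerGLPair K G w
        (Matrix.of fun i j => ghostEl K G (es i) * lam (edgeEl K G (es j))) P' ∧
      PhiProps K G es
        (Matrix.of fun i j => ghostEl K G (es i) * lam (edgeEl K G (es j))) P' lam := by
  classical
  set W := vertexEl K G w with hW
  set Vv := vertexEl K G v with hVv
  set Ee : Fin n → LPA K G := fun i => edgeEl K G (es i) with hEe
  set Gg : Fin n → LPA K G := fun i => ghostEl K G (es i) with hGg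
  have hWG : ∀ i, W * Gg i = Gg i := fun i => by
    simpa [hr i] using rG K G (es i)
  have hEW : ∀ i, Ee i * W = Ee i := fun i => by
    simpa [hr i] using Er K G (es i)
  have hVE : ∀ i, Vv * Ee i = Ee i := fun i => by
    simpa [hs i] using sE K G (es i)
  have hGV : ∀ i, Gg i * Vv = Gg i := fun i => by
    simpa [hs i] using gS K G (es i)
  have hck : Vv = ∑ k, Ee k * Gg k := ck2v hn hes hs hfull
  have hlamW : lam W = W := h0 w
  have hlamV : lam Vv = Vv := h0 v
  have hlamEW : ∀ j, lam (Ee j) * W = lam (Ee j) := fun j => by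
    rw [← hlamW, ← map_mul, hEW]
  have hWlamG : ∀ j, W * lam (Gg j) = lam (Gg j) := fun j => by
    rw [← hlamW, ← map_mul, hWG]
  have hVlamE : ∀ j, Vv * lam (Ee j) = lam (Ee j) := fun j => by
    rw [← hlamV, ← map_mul, hVE]
  have hlamGV : ∀ j, lam (Gg j) * Vv = lam (Gg j) := fun j => by
    rw [← hlamV, ← map_mul, hGV]
  have hlamck : ∑ k, lam (Ee k) * lam (Gg k) = Vv := by
    rw [← hlamV, hck, map_sum]
    simp [map_mul]
  have hgd : ∀ i j, Gg i * Ee j = if i = j then W else 0 := fun i j =>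
    gE_delta hes hr i j
  refine ⟨Matrix.of fun i j => lam (Gg i) * Ee j, ⟨?_, ?_, ?_, ?_⟩, h0, h1, h2, ?_, ?_⟩
  · intro i j
    show W * (Gg i * lam (Ee j)) * W = Gg i * lam (Ee j)
    rw [← mul_assoc W, hWG, mul_assoc, hlamEW]
  · intro i j
    show W * (lam (Gg i) * Ee j) * W = lam (Gg i) * Ee j
    rw [← mul_assoc W, hWlamG, mul_assoc, hEW]
  · ext i j
    rw [Matrix.mul_apply, Matrix.diagonal_apply]
    have hterm : ∀ k, (Matrix.of fun i j => Gg i * lam (Ee j)) i k *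
        (Matrix.of fun i j => lam (Gg i) * Ee j) k j
        = Gg i * (lam (Ee k) * lam (Gg k) * Ee j) := by
      intro k
      show (Gg i * lam (Ee k)) * (lam (Gg k) * Ee j) = _
      rw [mul_assoc, ← mul_assoc (lam (Ee k))]
    rw [Finset.sum_congr rfl fun k _ => hterm k, ← Finset.mul_sum, ← Finset.sum_mul,
      hlamck, ← mul_assoc, hGV, hgd i j]
  · ext i j
    rw [Matrix.mul_apply, Matrix.diagonal_apply]
    have hterm : ∀ k, (Matrix.of fun i j => lam (Gg i) * Ee j) i k *
        (Matrix.of fun i j => Gg i * lam (Ee j)) k j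
        = lam (Gg i) * (Ee k * Gg k * lam (Ee j)) := by
      intro k
      show (lam (Gg i) * Ee k) * (Gg k * lam (Ee j)) = _
      rw [mul_assoc, ← mul_assoc (Ee k)]
    rw [Finset.sum_congr rfl fun k _ => hterm k, ← Finset.mul_sum, ← Finset.sum_mul,
      ← hck, hVlamE, ← map_mul]
    have : Gg i * Ee j = if i = j then W else 0 := hgd i j
    rw [this]
    split <;> simp [hlamW] <;> exact hW
  · intro i
    show lam (Ee i) = ∑ k, Ee k * (Gg k * lam (Ee i))
    have : ∀ k, Ee k * (Gg k * lam (Ee i)) = (Ee k * Gg k) * lam (Ee i) := fun k =>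
      (mul_assoc _ _ _).symm
    rw [Finset.sum_congr rfl fun k _ => this k, ← Finset.sum_mul, ← hck, hVlamE]
  · intro i
    show lam (Gg i) = ∑ k, (lam (Gg i) * Ee k) * Gg k
    have : ∀ k, (lam (Gg i) * Ee k) * Gg k = lam (Gg i) * (Ee k * Gg k) := fun k =>
      mul_assoc _ _ _
    rw [Finset.sum_congr rfl fun k _ => this k, ← Finset.mul_sum, ← hck, hlamGV]

/-- Part 2: injectivity. -/
lemma part2 (hes : Function.Injective es) (hr : ∀ i, G.r (es i) = w)
    (P P' Q Q' : Matrix (Fin n) (Fin n) (LPA K G))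
    (hP : IsCornerGLPair K G w P P') (hQ : IsCornerGLPair K G w Q Q')
    (φ ψ : LPA K G →ₐ[K] LPA K G)
    (hφ : PhiProps K G es P P' φ) (hψ : PhiProps K G es Q Q' ψ) (heq : φ = ψ) :
    P = Q := by
  classical
  have key : ∀ (R R' : Matrix (Fin n) (Fin n) (LPA K G)) (χ : LPA K G →ₐ[K] LPA K G),
      IsCornerGLPair K G w R R' → PhiProps K G es R R' χ →
      ∀ i j, R i j = ghostEl K G (es i) * χ (edgeEl K G (es j)) := by
    intro R R' χ hR hχ i j
    rw [hχ.2.2.2.1 j, Finset.mul_sum]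
    have : ∀ k, ghostEl K G (es i) * (edgeEl K G (es k) * R k j)
        = (if i = k then vertexEl K G w else 0) * R k j := fun k => by
      rw [← mul_assoc, gE_delta hes hr]
    rw [Finset.sum_congr rfl fun k _ => this k]
    simp only [ite_mul, zero_mul]
    rw [Finset.sum_ite_eq, if_pos (Finset.mem_univ i), corner_left (hR.1 i j)]
  ext i j
  rw [key P P' φ hP hφ i j, key Q Q' ψ hQ hψ i j, heq]

/-- Part 3: composition corresponds to `⋆`. -/
lemma part3 (hes : Function.Injective es) (hr : ∀ i, G.r (es i) = w)
    (P P' Q Q' : Matrix (Fin n) (Fin n) (LPA K G))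
    (hP : IsCornerGLPair K G w P P') (hQ : IsCornerGLPair K G w Q Q')
    (φ ψ : LPA K G →ₐ[K] LPA K G)
    (hφ : PhiProps K G es P P' φ) (hψ : PhiProps K G es Q Q' ψ) :
    IsCornerGLPair K G w (P * Q.map ⇑φ) (Q'.map ⇑φ * P') ∧
    PhiProps K G es (P * Q.map ⇑φ) (Q'.map ⇑φ * P') (φ.comp ψ) := by
  classical
  set W := vertexEl K G w with hW
  have hφW : φ W = W := hφ.1 w
  have hφQW : ∀ i j, φ (Q i j) * W = φ (Q i j) := fun i j => by
    rw [← hφW, ← map_mul, corner_right (hQ.1 i j)]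
  have hWφQ : ∀ i j, W * φ (Q i j) = φ (Q i j) := fun i j => by
    rw [← hφW, ← map_mul, corner_left (hQ.1 i j)]
  have hφQ'W : ∀ i j, φ (Q' i j) * W = φ (Q' i j) := fun i j => by
    rw [← hφW, ← map_mul, corner_right (hQ.2.1 i j)]
  have hWφQ' : ∀ i j, W * φ (Q' i j) = φ (Q' i j) := fun i j => by
    rw [← hφW, ← map_mul, corner_left (hQ.2.1 i j)]
  have hmapmul : ∀ (A B : Matrix (Fin n) (Fin n) (LPA K G)),
      (A * B).map ⇑φ = A.map ⇑φ * B.map ⇑φ := by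
    intro A B
    ext i j
    simp [Matrix.mul_apply, Matrix.map_apply, map_sum, map_mul]
  have hdiagmap : (Matrix.diagonal fun _ : Fin n => W).map ⇑φ
      = Matrix.diagonal fun _ : Fin n => W := by
    ext i j
    by_cases h : i = j <;>
      simp [Matrix.map_apply, Matrix.diagonal_apply, h, hφW]
  have hPd : P * Matrix.diagonal (fun _ : Fin n => W) = P := by
    ext i j
    rw [Matrix.mul_diagonal, corner_right (hP.1 i j)]
  have hdP' : Matrix.diagonal (fun _ : Fin n => W) * P' = P' := by
    ext i j
    rw [Matrix.diagonal_mul, corner_left (hP.2.1 i j)]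
  have hdQm : Matrix.diagonal (fun _ : Fin n => W) * Q.map ⇑φ = Q.map ⇑φ := by
    ext i j
    rw [Matrix.diagonal_mul, Matrix.map_apply, hWφQ]
  have hQ'md : Q'.map ⇑φ * Matrix.diagonal (fun _ : Fin n => W) = Q'.map ⇑φ := by
    ext i j
    rw [Matrix.mul_diagonal, Matrix.map_apply, hφQ'W]
  constructor
  · refine ⟨?_, ?_, ?_, ?_⟩
    · intro i j
      show W * ((P * Q.map ⇑φ) i j) * W = (P * Q.map ⇑φ) i j
      rw [Matrix.mul_apply, Finset.mul_sum, Finset.sum_mul]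
      refine Finset.sum_congr rfl fun k _ => ?_
      rw [Matrix.map_apply, ← mul_assoc W, corner_left (hP.1 i k), mul_assoc, hφQW]
    · intro i j
      show W * ((Q'.map ⇑φ * P') i j) * W = (Q'.map ⇑φ * P') i j
      rw [Matrix.mul_apply, Finset.mul_sum, Finset.sum_mul]
      refine Finset.sum_congr rfl fun k _ => ?_
      rw [Matrix.map_apply, ← mul_assoc W, hWφQ', mul_assoc, corner_right (hP.2.1 k j)]
    · calc P * Q.map ⇑φ * (Q'.map ⇑φ * P')
          = P * ((Q.map ⇑φ * Q'.map ⇑φ) * P') := by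
            rw [mul_assoc, mul_assoc]
        _ = Matrix.diagonal fun _ => W := by
            rw [← hmapmul, hQ.2.2.1, hdiagmap, hdP', hP.2.2.1]
    · calc Q'.map ⇑φ * P' * (P * Q.map ⇑φ)
          = Q'.map ⇑φ * ((P' * P) * Q.map ⇑φ) := by
            rw [mul_assoc, mul_assoc]
        _ = Matrix.diagonal fun _ => W := by
            rw [hP.2.2.2, hdQm, ← hmapmul, hQ.2.2.2, hdiagmap]
  · refine ⟨fun u => ?_, fun e he => ?_, fun e he => ?_, fun i => ?_, fun i => ?_⟩
    · simp [AlgHom.comp_apply, hψ.1 u, hφ.1 u]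
    · simp [AlgHom.comp_apply, hψ.2.1 e he, hφ.2.1 e he]
    · simp [AlgHom.comp_apply, hψ.2.2.1 e he, hφ.2.2.1 e he]
    · rw [AlgHom.comp_apply, hψ.2.2.2.1 i, map_sum]
      have hterm : ∀ k, φ (edgeEl K G (es k) * Q k i)
          = ∑ m, edgeEl K G (es m) * (P m k * φ (Q k i)) := by
        intro k
        rw [map_mul, hφ.2.2.2.1 k, Finset.sum_mul]
        exact Finset.sum_congr rfl fun m _ => mul_assoc _ _ _
      rw [Finset.sum_congr rfl fun k _ => hterm k, Finset.sum_comm]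
      refine Finset.sum_congr rfl fun m _ => ?_
      rw [← Finset.mul_sum, Matrix.mul_apply]
      simp only [Matrix.map_apply]
    · rw [AlgHom.comp_apply, hψ.2.2.2.2 i, map_sum]
      have hterm : ∀ k, φ (Q' i k * ghostEl K G (es k))
          = ∑ m, (φ (Q' i k) * P' k m) * ghostEl K G (es m) := by
        intro k
        rw [map_mul, hφ.2.2.2.2 k, Finset.mul_sum]
        exact Finset.sum_congr rfl fun m _ => (mul_assoc _ _ _).symm
      rw [Finset.sum_congr rfl fun k _ => hterm k, Finset.sum_comm]
      refine Finset.sum_congr rfl fun m _ => ?_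
      rw [← Finset.sum_mul, Matrix.mul_apply]
      simp only [Matrix.map_apply]

end main


/-- Assume `|s^{-1}(v)| = n`.  Then `P ↦ φ_P` is a monoid isomorphism
from `(GL_n(w L_K(E) w), ⋆)`, `P ⋆ Q = P φ_P(Q)`, onto the monoid `End_{v,w}(L_K(E))`
of endomorphisms fixing all vertices and all edges and ghost edges other than
`e_1, …, e_n`: every such `λ` equals `φ_P` for the unique matrix `P = (e_i* λ(e_j))`,
distinct matrices give distinct endomorphisms, and composition corresponds to `⋆`. -/
theorem stmt4 (K : Type) [Field K] (G : DirGraph) (n : ℕ) (hn : 0 < n)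
    (v w : G.V) (es : Fin n → G.E) (hes : Function.Injective es)
    (hs : ∀ i, G.s (es i) = v) (hr : ∀ i, G.r (es i) = w)
    (hfull : ∀ e : G.E, G.s e = v → e ∈ Set.range es) :
    (∀ lam : LPA K G →ₐ[K] LPA K G,
      (∀ u : G.V, lam (vertexEl K G u) = vertexEl K G u) →
      (∀ e : G.E, e ∉ Set.range es → lam (edgeEl K G e) = edgeEl K G e) →
      (∀ e : G.E, e ∉ Set.range es → lam (ghostEl K G e) = ghostEl K G e) →
      ∃ P' : Matrix (Fin n) (Fin n) (LPA K G),
        IsCornerGLPair K G w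
          (Matrix.of fun i j => ghostEl K G (es i) * lam (edgeEl K G (es j))) P' ∧
        PhiProps K G es
          (Matrix.of fun i j => ghostEl K G (es i) * lam (edgeEl K G (es j))) P' lam) ∧
    (∀ P P' Q Q' : Matrix (Fin n) (Fin n) (LPA K G),
      IsCornerGLPair K G w P P' → IsCornerGLPair K G w Q Q' →
      ∀ φ ψ : LPA K G →ₐ[K] LPA K G,
        PhiProps K G es P P' φ → PhiProps K G es Q Q' ψ → φ = ψ → P = Q) ∧
    (∀ P P' Q Q' : Matrix (Fin n) (Fin n) (LPA K G),
      IsCornerGLPair K G w P P' → IsCornerGLPair K G w Q Q' →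
      ∀ φ ψ : LPA K G →ₐ[K] LPA K G,
        PhiProps K G es P P' φ → PhiProps K G es Q Q' ψ →
        IsCornerGLPair K G w (P * Q.map ⇑φ) (Q'.map ⇑φ * P') ∧
        PhiProps K G es (P * Q.map ⇑φ) (Q'.map ⇑φ * P') (φ.comp ψ)) := by
  exact ⟨fun lam h0 h1 h2 => part1 hn hes hs hr hfull lam h0 h1 h2,
    fun P P' Q Q' hP hQ φ ψ hφ hψ heq => part2 hes hr P P' Q Q' hP hQ φ ψ hφ hψ heq,
    fun P P' Q Q' hP hQ φ ψ hφ hψ => part3 hes hr P P' Q Q' hP hQ φ ψ hφ hψ⟩
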